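/- The cartesian product of two prismal submonoids C₁ ⊆ ℤ^{d₁} and C₂ ⊆ ℤ^{d₂} is a prismal submonoid of ℤ^{d₁+d₂}. -/

import Mathlib

/-- Canonical embedding of `ℤⁿ` into `ℝⁿ`. -/
def coeR {n : ℕ} (α : Fin n → ℤ) : Fin n → ℝ := fun i => (α i : ℝ)

/-- Convex hull in `ℝⁿ` of a subset of `ℤⁿ`. -/
def convC {n : ℕ} (C : Set (Fin n → ℤ)) : Set (Fin n → ℝ) :=
  convexHull ℝ (coeR '' C)

/-- The closure `cl(C) = ℤⁿ ∩ topological-closure(conv C)` of a subset of `ℤⁿ`. -/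
def intCl {n : ℕ} (C : Set (Fin n → ℤ)) : Set (Fin n → ℤ) :=
  {α | coeR α ∈ closure (convC C)}

/-- `C` is pure: `kα ∈ C` with `k ≥ 1` implies `α ∈ C`. -/
def IsPure {n : ℕ} (C : Set (Fin n → ℤ)) : Prop :=
  ∀ (k : ℕ) (α : Fin n → ℤ), 1 ≤ k → k • α ∈ C → α ∈ C

/-- `C` is a submonoid of `(ℤⁿ, +)` (as a set). -/
def IsSubmonoidSet {n : ℕ} (C : Set (Fin n → ℤ)) : Prop :=
  (0 : Fin n → ℤ) ∈ C ∧ ∀ a ∈ C, ∀ b ∈ C, a + b ∈ C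

/-- `M` is a finitely generated monoid (as a subset of `ℤⁿ`). -/
def IsFGSet {n : ℕ} (M : Set (Fin n → ℤ)) : Prop :=
  ∃ F : Finset (Fin n → ℤ),
    (AddSubmonoid.closure (F : Set (Fin n → ℤ)) : Set (Fin n → ℤ)) = M

/-- `C` is almost prismal: for every real subspace `V ⊆ ℝⁿ`, `cl(C ∩ V)` is finitely generated. -/
def AlmostPrismal {n : ℕ} (C : Set (Fin n → ℤ)) : Prop :=
  ∀ V : Submodule ℝ (Fin n → ℝ), IsFGSet (intCl {α ∈ C | coeR α ∈ V})

/-- `C` is prismal: pure and almost prismal. -/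
def Prismal {n : ℕ} (C : Set (Fin n → ℤ)) : Prop := IsPure C ∧ AlmostPrismal C


namespace PrismalAux

@[simp] lemma coeR_zero {n : ℕ} : coeR (0 : Fin n → ℤ) = 0 := by
  funext i; simp [coeR]

@[simp] lemma coeR_add {n : ℕ} (a b : Fin n → ℤ) : coeR (a + b) = coeR a + coeR b := by
  funext i; simp [coeR]

@[simp] lemma coeR_nsmul {n : ℕ} (k : ℕ) (a : Fin n → ℤ) :
    coeR (k • a) = (k : ℝ) • coeR a := by
  funext i; simp [coeR]

@[simp] lemma coeR_sub {n : ℕ} (a b : Fin n → ℤ) : coeR (a - b) = coeR a - coeR b := by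
  funext i; simp [coeR]

lemma coeR_injective {n : ℕ} : Function.Injective (coeR (n := n)) := by
  intro a b h
  funext i
  have h2 : ((a i : ℝ)) = (b i : ℝ) := congrFun h i
  exact_mod_cast h2

lemma coeR_sum {n : ℕ} {ι : Type*} (s : Finset ι) (f : ι → (Fin n → ℤ)) :
    coeR (∑ i ∈ s, f i) = ∑ i ∈ s, coeR (f i) := by
  classical
  induction s using Finset.induction with
  | empty => simp
  | @insert a s' h ih => simp [Finset.sum_insert h, ih]

/-- The (real) conical hull of the image of an integer set. -/
def ZCne {n : ℕ} (A : Set (Fin n → ℤ)) : Set (Fin n → ℝ) :=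
  {x | ∃ F : Finset (Fin n → ℤ), ↑F ⊆ A ∧ ∃ t : (Fin n → ℤ) → ℝ,
    (∀ a, 0 ≤ t a) ∧ x = ∑ a ∈ F, t a • coeR a}

lemma zero_mem_ZCne {n : ℕ} (A : Set (Fin n → ℤ)) : (0 : Fin n → ℝ) ∈ ZCne A :=
  ⟨∅, by simp, fun _ => 0, fun _ => le_rfl, by simp⟩

lemma mem_ZCne_of_mem {n : ℕ} {A : Set (Fin n → ℤ)} {a : Fin n → ℤ} (ha : a ∈ A) :
    coeR a ∈ ZCne A := by
  refine ⟨{a}, by simpa using ha, fun _ => 1, fun _ => zero_le_one, by simp⟩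

lemma ZCne_add_mem {n : ℕ} {A : Set (Fin n → ℤ)} {x y : Fin n → ℝ}
    (hx : x ∈ ZCne A) (hy : y ∈ ZCne A) : x + y ∈ ZCne A := by
  classical
  obtain ⟨F, hF, t, ht, rfl⟩ := hx
  obtain ⟨G, hG, s, hs, rfl⟩ := hy
  refine ⟨F ∪ G, by rw [Finset.coe_union]; exact Set.union_subset hF hG,
    (fun a => (if a ∈ F then t a else 0) + (if a ∈ G then s a else 0)), ?_, ?_⟩
  · intro a
    have := ht a; have := hs a
    positivity
  · have h1 : ∑ a ∈ F ∪ G, (if a ∈ F then t a else 0) • coeR a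
        = ∑ a ∈ F, t a • coeR a := by
      rw [← Finset.sum_subset (Finset.subset_union_left (s₂ := G))
        (fun a _ ha => by simp [ha])]
      exact Finset.sum_congr rfl fun a ha => by simp [ha]
    have h2 : ∑ a ∈ F ∪ G, (if a ∈ G then s a else 0) • coeR a
        = ∑ a ∈ G, s a • coeR a := by
      rw [← Finset.sum_subset (Finset.subset_union_right (s₁ := F))
        (fun a _ ha => by simp [ha])]
      exact Finset.sum_congr rfl fun a ha => by simp [ha]
    rw [← h1, ← h2, ← Finset.sum_add_distrib]
    exact Finset.sum_congr rfl fun a _ => by rw [add_smul]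

lemma ZCne_smul_mem {n : ℕ} {A : Set (Fin n → ℤ)} {x : Fin n → ℝ} {c : ℝ}
    (hc : 0 ≤ c) (hx : x ∈ ZCne A) : c • x ∈ ZCne A := by
  obtain ⟨F, hF, t, ht, rfl⟩ := hx
  refine ⟨F, hF, fun a => c * t a, fun a => mul_nonneg hc (ht a), ?_⟩
  rw [Finset.smul_sum]
  exact Finset.sum_congr rfl fun a _ => by rw [smul_smul]

lemma convex_ZCne {n : ℕ} (A : Set (Fin n → ℤ)) : Convex ℝ (ZCne A) := by
  intro x hx y hy a b ha hb _
  exact ZCne_add_mem (ZCne_smul_mem ha hx) (ZCne_smul_mem hb hy)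

lemma convexHull_coeR_subset_ZCne {n : ℕ} (A : Set (Fin n → ℤ)) :
    convexHull ℝ (coeR '' A) ⊆ ZCne A := by
  apply convexHull_min _ (convex_ZCne A)
  rintro x ⟨a, ha, rfl⟩
  exact mem_ZCne_of_mem ha

lemma ZCne_subset_submodule {n : ℕ} {A : Set (Fin n → ℤ)} {U : Submodule ℝ (Fin n → ℝ)}
    (h : ∀ a ∈ A, coeR a ∈ U) : ZCne A ⊆ U := by
  rintro x ⟨F, hF, t, ht, rfl⟩
  exact Submodule.sum_mem U fun a ha => Submodule.smul_mem U _ (h a (hF ha))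

lemma ZCne_mono {n : ℕ} {A B : Set (Fin n → ℤ)} (h : A ⊆ B) : ZCne A ⊆ ZCne B := by
  rintro x ⟨F, hF, t, ht, rfl⟩
  exact ⟨F, hF.trans h, t, ht, rfl⟩

end PrismalAux

namespace PrismalAux

/-- Carathéodory step: a point of the integral cone is a nonnegative combination of a
linearly independent subfamily. -/
lemma ZCne_caratheodory {n : ℕ} {A : Set (Fin n → ℤ)} {x : Fin n → ℝ}
    (hx : x ∈ ZCne A) :
    ∃ F : Finset (Fin n → ℤ), ↑F ⊆ A ∧ ∃ t : (Fin n → ℤ) → ℝ,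
      (∀ a, 0 ≤ t a) ∧ x = ∑ a ∈ F, t a • coeR a ∧
      LinearIndependent ℝ (fun a : ↥F => coeR a.val) := by
  classical
  obtain ⟨F, hF, t, ht, hrep⟩ := hx
  suffices H : ∀ (N : ℕ) (F : Finset (Fin n → ℤ)), F.card = N → ↑F ⊆ A →
      ∀ t : (Fin n → ℤ) → ℝ, (∀ a, 0 ≤ t a) → x = ∑ a ∈ F, t a • coeR a →
      ∃ F : Finset (Fin n → ℤ), ↑F ⊆ A ∧ ∃ t : (Fin n → ℤ) → ℝ,
        (∀ a, 0 ≤ t a) ∧ x = ∑ a ∈ F, t a • coeR a ∧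
        LinearIndependent ℝ (fun a : ↥F => coeR a.val) by
    exact H F.card F rfl hF t ht hrep
  clear hF ht hrep F t
  intro N
  induction N using Nat.strong_induction_on with
  | _ N ih =>
  intro F hN hF t ht hrep
  by_cases hli : LinearIndependent ℝ (fun a : ↥F => coeR a.val)
  · exact ⟨F, hF, t, ht, hrep, hli⟩
  · -- extract a dependency
    obtain ⟨c, hc0, i₀, hi₀⟩ := Fintype.not_linearIndependent_iff.mp hli
    -- dependency as a function on vectors
    set d : (Fin n → ℤ) → ℝ := fun a => if h : a ∈ F then c ⟨a, h⟩ else 0 with hd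
    have hdsum : ∑ a ∈ F, d a • coeR a = 0 := by
      rw [← Finset.sum_attach F (fun a => d a • coeR a)]
      rw [← hc0]
      exact Finset.sum_congr rfl fun i _ => by simp [hd, i.2]
    -- WLOG there is a positive coefficient
    have key : ∀ e : (Fin n → ℤ) → ℝ, (∑ a ∈ F, e a • coeR a = 0) →
        (∃ a ∈ F, 0 < e a) →
        ∃ F' : Finset (Fin n → ℤ), F'.card < F.card ∧ ↑F' ⊆ A ∧
          ∃ t' : (Fin n → ℤ) → ℝ, (∀ a, 0 ≤ t' a) ∧ x = ∑ a ∈ F', t' a • coeR a := by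
      intro e hesum ⟨a₀, ha₀F, ha₀⟩
      set P := F.filter (fun a => 0 < e a) with hP
      have hPne : P.Nonempty := ⟨a₀, Finset.mem_filter.mpr ⟨ha₀F, ha₀⟩⟩
      obtain ⟨b, hbP, hbmin⟩ := Finset.exists_min_image P (fun a => t a / e a) hPne
      have hbF : b ∈ F := (Finset.mem_filter.mp hbP).1
      have hbe : 0 < e b := (Finset.mem_filter.mp hbP).2
      set lam := t b / e b with hlam
      have hlam0 : 0 ≤ lam := div_nonneg (ht b) hbe.le
      set t' : (Fin n → ℤ) → ℝ := fun a => if a ∈ F then t a - lam * e a else 0 with ht'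
      have ht'0 : ∀ a, 0 ≤ t' a := by
        intro a
        rw [ht']
        dsimp only
        split
        · rename_i haF
          by_cases hae : 0 < e a
          · have h2 := hbmin a (Finset.mem_filter.mpr ⟨haF, hae⟩)
            have h3 : lam * e a ≤ t a := by
              rw [hlam, div_mul_eq_mul_div, div_le_iff₀ hbe]
              rw [hlam, div_le_div_iff₀ hbe hae] at h2
              nlinarith
            linarith
          · push_neg at hae
            nlinarith [ht a, mul_nonneg hlam0 (neg_nonneg.mpr hae)]
        · exact le_rfl
      have ht'b : t' b = 0 := by
        rw [ht']
        simp only [hbF, if_pos]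
        rw [hlam]
        field_simp
        ring
      have hrep' : x = ∑ a ∈ F.erase b, t' a • coeR a := by
        have h1 : ∑ a ∈ F.erase b, t' a • coeR a = ∑ a ∈ F, t' a • coeR a :=
          Finset.sum_erase F (by rw [ht'b, zero_smul])
        rw [h1]
        have h2 : ∑ a ∈ F, t' a • coeR a
            = ∑ a ∈ F, (t a • coeR a) - lam • ∑ a ∈ F, (e a • coeR a) := by
          rw [Finset.smul_sum, ← Finset.sum_sub_distrib]
          refine Finset.sum_congr rfl fun a ha => ?_
          rw [ht']
          simp only [ha, if_pos]
          rw [sub_smul, mul_smul]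
        rw [h2, hesum, smul_zero, sub_zero, hrep]
      have hsubA : ↑(F.erase b) ⊆ A := fun y hy =>
        hF (Finset.mem_coe.mpr (Finset.mem_of_mem_erase (Finset.mem_coe.mp hy)))
      exact ⟨F.erase b, Finset.card_erase_lt_of_mem hbF, hsubA, t', ht'0, hrep'⟩
    have hcases : (∃ a ∈ F, 0 < d a) ∨ (∃ a ∈ F, 0 < -d a) := by
      have hne : d i₀.1 ≠ 0 := by
        rw [hd]; simpa [i₀.2] using hi₀
      rcases lt_or_gt_of_ne hne with h | h
      · exact Or.inr ⟨i₀.1, i₀.2, by linarith⟩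
      · exact Or.inl ⟨i₀.1, i₀.2, h⟩
    have hnegsum : ∑ a ∈ F, (-d) a • coeR a = 0 := by
      rw [← neg_eq_zero, ← Finset.sum_neg_distrib]
      rw [← hdsum]
      exact Finset.sum_congr rfl fun a _ => by simp
    obtain ⟨F', hcard, hF', t', ht', hrep'⟩ :=
      hcases.elim (key d hdsum) (key (-d) hnegsum)
    rw [hN] at hcard
    exact ih F'.card hcard F' rfl hF' t' ht' hrep'

end PrismalAux

namespace PrismalAux
open Matrix

/-- real dot product -/
def dotR {n : ℕ} (x y : Fin n → ℝ) : ℝ := ∑ l, x l * y l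

lemma dotR_comm {n : ℕ} (x y : Fin n → ℝ) : dotR x y = dotR y x := by
  unfold dotR; exact Finset.sum_congr rfl fun l _ => mul_comm _ _

lemma dotR_smul_right {n : ℕ} (c : ℝ) (x y : Fin n → ℝ) :
    dotR x (c • y) = c * dotR x y := by
  unfold dotR; rw [Finset.mul_sum]
  exact Finset.sum_congr rfl fun l _ => by simp; ring

lemma dotR_sum_right {n : ℕ} {ι : Type*} (s : Finset ι) (x : Fin n → ℝ) (f : ι → (Fin n → ℝ)) :
    dotR x (∑ i ∈ s, f i) = ∑ i ∈ s, dotR x (f i) := by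
  unfold dotR
  rw [Finset.sum_comm]
  exact Finset.sum_congr rfl fun l _ => by rw [Finset.sum_apply, Finset.mul_sum]

lemma dotR_self_eq_zero {n : ℕ} {x : Fin n → ℝ} (h : dotR x x = 0) : x = 0 := by
  have : ∀ l ∈ Finset.univ, (0:ℝ) ≤ x l * x l := fun l _ => mul_self_nonneg _
  funext l
  have h2 := (Finset.sum_eq_zero_iff_of_nonneg this).mp h l (Finset.mem_univ l)
  simpa [mul_self_eq_zero] using h2

/-- key rationality lemma: an integer vector in the real cone over a set of integer vectors has
a positive multiple in the generated monoid. -/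
lemma exists_pos_nsmul_mem_closure {n : ℕ} {A : Set (Fin n → ℤ)} {u : Fin n → ℤ}
    (hu : coeR u ∈ ZCne A) :
    ∃ k : ℕ, 0 < k ∧ (k • u) ∈ AddSubmonoid.closure A := by
  classical
  obtain ⟨F, hF, t, ht, hrep, hli⟩ := ZCne_caratheodory hu
  set ι := {a // a ∈ F}
  set Gq : Matrix ι ι ℚ := fun i j => ((∑ l, i.1 l * j.1 l : ℤ) : ℚ) with hGq
  set Gr : Matrix ι ι ℝ := fun i j => ((∑ l, i.1 l * j.1 l : ℤ) : ℝ) with hGrdef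
  have hGr : ∀ i j : ι, Gr i j = dotR (coeR i.1) (coeR j.1) := by
    intro i j
    rw [hGrdef]
    unfold dotR coeR
    push_cast
    rfl
  have lemma1 : ∀ (z : ι → ℝ) (i : ι),
      (Gr *ᵥ z) i = dotR (coeR i.1) (∑ j : ι, z j • coeR j.1) := by
    intro z i
    rw [dotR_sum_right]
    unfold Matrix.mulVec dotProduct
    refine Finset.sum_congr rfl fun j _ => ?_
    rw [dotR_smul_right]
    show Gr i j * z j = z j * dotR (coeR i.1) (coeR j.1)
    rw [hGr i j]
    ring
  have hinj : ∀ z : ι → ℝ, Gr *ᵥ z = 0 → z = 0 := by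
    intro z hz
    set w : Fin n → ℝ := ∑ j : ι, z j • coeR j.1 with hw
    have hww : dotR w w = 0 := by
      have h1 : dotR w w = ∑ j : ι, dotR (z j • coeR j.1) w := by
        rw [hw]
        nth_rewrite 1 [dotR_comm]
        rw [dotR_sum_right]
        exact Finset.sum_congr rfl fun j _ => dotR_comm _ _
      rw [h1]
      have h2 : ∀ j : ι, dotR (z j • coeR j.1) w = z j * (Gr *ᵥ z) j := by
        intro j
        calc dotR (z j • coeR j.1) w = z j * dotR w (coeR j.1) := by
              rw [dotR_comm, dotR_smul_right]
          _ = z j * dotR (coeR j.1) w := by rw [dotR_comm w (coeR j.1)]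
          _ = z j * (Gr *ᵥ z) j := by rw [lemma1 z j, ← hw]
      rw [Finset.sum_congr rfl fun j _ => h2 j]
      rw [hz]
      simp
    have hw0 : w = 0 := dotR_self_eq_zero hww
    funext i
    exact Fintype.linearIndependent_iff.mp hli z hw0 i
  have hdet_r : Gr.det ≠ 0 := by
    intro h
    obtain ⟨v, hv, hv0⟩ := (Matrix.exists_mulVec_eq_zero_iff).mpr h
    exact hv (hinj v hv0)
  have hmap : Gr = Gq.map ((↑) : ℚ → ℝ) := by
    funext i j
    rw [hGrdef, hGq]
    simp [Matrix.map]
  have hdet_q : Gq.det ≠ 0 := by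
    intro h
    apply hdet_r
    rw [hmap]
    have hmd := RingHom.map_det (Rat.castHom ℝ) Gq
    rw [RingHom.mapMatrix_apply] at hmd
    have : (Gq.map ((Rat.castHom ℝ) : ℚ → ℝ)).det = ((Gq.det : ℚ) : ℝ) := by
      rw [← hmd]; rfl
    rw [show (Rat.cast : ℚ → ℝ) = ((Rat.castHom ℝ) : ℚ → ℝ) from rfl, this, h]
    simp
  set rhsq : ι → ℚ := fun i => ((∑ l, i.1 l * u l : ℤ) : ℚ) with hrhsq
  set q0 : ι → ℚ := Gq⁻¹ *ᵥ rhsq with hq0def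
  have hq0 : Gq *ᵥ q0 = rhsq := by
    rw [hq0def, Matrix.mulVec_mulVec, Matrix.mul_nonsing_inv _ (isUnit_iff_ne_zero.mpr hdet_q),
      Matrix.one_mulVec]
  set tvec : ι → ℝ := fun i => t i.1 with htvec
  have hsum_attach : ∑ j : ι, tvec j • coeR j.1 = coeR u := by
    rw [hrep]
    exact Finset.sum_coe_sort F (fun a => t a • coeR a)
  have hGrt : Gr *ᵥ tvec = fun i => ((∑ l, i.1 l * u l : ℤ) : ℝ) := by
    funext i
    rw [lemma1 tvec i, hsum_attach]
    unfold dotR coeR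
    push_cast
    rfl
  have hcast : Gr *ᵥ (fun i => ((q0 i : ℝ))) = Gr *ᵥ tvec := by
    funext i
    have h1 : (Gr *ᵥ fun i => ((q0 i : ℝ))) i = ((Gq *ᵥ q0) i : ℝ) := by
      unfold Matrix.mulVec dotProduct
      rw [hmap]
      push_cast
      rfl
    rw [h1, hq0, hGrt, hrhsq]
    push_cast
    rfl
  have hqt : ∀ i : ι, (q0 i : ℝ) = tvec i := by
    have h0 : Gr *ᵥ ((fun i => ((q0 i : ℝ))) - tvec) = 0 := by
      have := Matrix.mulVec_sub Gr (fun i => ((q0 i : ℝ))) tvec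
      rw [this, hcast, sub_self]
    have := hinj _ h0
    intro i
    have h2 := congrFun this i
    simpa [sub_eq_zero] using h2
  have hq0nonneg : ∀ i : ι, 0 ≤ q0 i := by
    intro i
    have : (0:ℝ) ≤ (q0 i : ℝ) := by rw [hqt i]; exact ht i.1
    exact_mod_cast this
  set k : ℕ := ∏ i : ι, (q0 i).den with hk
  have hkpos : 0 < k := Finset.prod_pos fun i _ => (q0 i).pos
  set m : ι → ℕ := fun i => k / (q0 i).den with hm
  have hkm : ∀ i : ι, k = (q0 i).den * m i := by
    intro i
    rw [hm]
    exact (Nat.mul_div_cancel' (Finset.dvd_prod_of_mem _ (Finset.mem_univ i))).symm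
  set ν : ι → ℕ := fun i => ((m i : ℤ) * (q0 i).num).toNat with hν
  have hνq : ∀ i : ι, ((ν i : ℚ)) = (k : ℚ) * q0 i := by
    intro i
    have hnum : (0:ℤ) ≤ (m i : ℤ) * (q0 i).num :=
      mul_nonneg (Int.ofNat_nonneg _) (Rat.num_nonneg.mpr (hq0nonneg i))
    have h1 : ((ν i : ℤ)) = (m i : ℤ) * (q0 i).num := by
      rw [hν]; exact Int.toNat_of_nonneg hnum
    have hden : ((q0 i).den : ℚ) ≠ 0 := by exact_mod_cast (q0 i).den_nz
    have hq : q0 i * ((q0 i).den : ℚ) = ((q0 i).num : ℚ) := by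
      have h3 : ((q0 i).num : ℚ) / ((q0 i).den : ℚ) * ((q0 i).den : ℚ) = ((q0 i).num : ℚ) :=
        div_mul_cancel₀ _ hden
      rw [Rat.num_div_den] at h3
      exact h3
    have h2 : (k : ℚ) * q0 i = ((m i : ℤ) * (q0 i).num : ℤ) := by
      have h4 : (k : ℚ) = ((q0 i).den : ℚ) * (m i : ℚ) := by
        rw [hkm i]; push_cast; ring
      rw [h4]
      push_cast
      rw [mul_comm ((q0 i).den : ℚ) (m i : ℚ), mul_assoc, mul_comm ((q0 i).den : ℚ) (q0 i), hq]
    rw [h2, ← h1]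
    push_cast
    ring
  refine ⟨k, hkpos, ?_⟩
  have hfinal : k • u = ∑ i : ι, ν i • i.1 := by
    apply coeR_injective
    rw [coeR_nsmul]
    have h2 : coeR (∑ i : ι, ν i • i.1) = ∑ i : ι, (ν i : ℝ) • coeR i.1 := by
      rw [coeR_sum]
      exact Finset.sum_congr rfl fun i _ => by rw [coeR_nsmul]
    rw [h2, ← hsum_attach, Finset.smul_sum]
    refine Finset.sum_congr rfl fun i _ => ?_
    rw [smul_smul]
    congr 1
    have : ((ν i : ℝ)) = ((k:ℝ) * (q0 i : ℝ)) := by exact_mod_cast hνq i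
    rw [this, hqt i]
  rw [hfinal]
  refine AddSubmonoid.sum_mem _ fun i _ => ?_
  exact AddSubmonoid.nsmul_mem _ (AddSubmonoid.subset_closure (hF i.2)) _

end PrismalAux

namespace PrismalAux

lemma interior_point {n : ℕ} {A : Set (Fin n → ℤ)} {F : Finset (Fin n → ℤ)}
    (hFA : ↑F ⊆ A) :
    ∃ ρ : ℝ, 0 < ρ ∧ ∀ v : Fin n → ℝ, v ∈ Submodule.span ℝ (coeR '' ↑F) → ‖v‖ ≤ ρ →
      (∑ a ∈ F, coeR a) + v ∈ ZCne A := by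
  classical
  obtain ⟨b, hbsub, hbspan, hbli⟩ := exists_linearIndependent ℝ (coeR '' (↑F : Set (Fin n → ℤ)))
  haveI : Fintype ↥b := (Set.Finite.subset (F.finite_toSet.image coeR) hbsub).fintype
  set W := Submodule.span ℝ (coeR '' (↑F : Set (Fin n → ℤ))) with hW
  have hWb : Submodule.span ℝ (Set.range (Subtype.val : ↥b → (Fin n → ℝ))) = W := by
    rw [Subtype.range_coe, hbspan]
  let B0 := Module.Basis.span hbli
  let e : ↥(Submodule.span ℝ (Set.range (Subtype.val : ↥b → (Fin n → ℝ)))) ≃ₗ[ℝ] ↥W :=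
    LinearEquiv.ofEq _ _ hWb
  let B : Module.Basis ↥b ℝ ↥W := B0.map e
  have hBu : ∀ u : ↥b, (B u : Fin n → ℝ) = u.1 := by
    intro u
    show (e (B0 u) : Fin n → ℝ) = u.1
    rw [show (e (B0 u) : Fin n → ℝ) = (B0 u : Fin n → ℝ) from rfl]
    exact congrArg Subtype.val (Module.Basis.span_apply hbli u)
  set K : ℝ := 1 + ∑ u : ↥b, ‖LinearMap.toContinuousLinearMap (B.coord u)‖ with hK
  have hsumnn : 0 ≤ ∑ u : ↥b, ‖LinearMap.toContinuousLinearMap (B.coord u)‖ :=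
    Finset.sum_nonneg fun u _ => ContinuousLinearMap.opNorm_nonneg _
  have hK1 : (1:ℝ) ≤ K := by rw [hK]; linarith
  have hKpos : (0:ℝ) < K := lt_of_lt_of_le one_pos hK1
  have hKu : ∀ u : ↥b, ‖LinearMap.toContinuousLinearMap (B.coord u)‖ ≤ K - 1 := by
    intro u
    rw [hK]
    have := Finset.single_le_sum
      (f := fun u : ↥b => ‖LinearMap.toContinuousLinearMap (B.coord u)‖)
      (fun u _ => ContinuousLinearMap.opNorm_nonneg _) (Finset.mem_univ u)
    linarith
  refine ⟨1/K, by positivity, ?_⟩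
  intro v hv hnorm
  set x : ↥W := ⟨v, hv⟩ with hx
  have hnormx : ‖x‖ ≤ 1/K := hnorm
  have hcbound : ∀ u : ↥b, |B.repr x u| ≤ 1 := by
    intro u
    have h1 : B.repr x u = LinearMap.toContinuousLinearMap (B.coord u) x := by
      rw [LinearMap.coe_toContinuousLinearMap', Module.Basis.coord_apply]
    rw [h1, ← Real.norm_eq_abs]
    calc ‖LinearMap.toContinuousLinearMap (B.coord u) x‖
        ≤ ‖LinearMap.toContinuousLinearMap (B.coord u)‖ * ‖x‖ :=
          ContinuousLinearMap.le_opNorm _ _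
      _ ≤ (K - 1) * (1/K) := by
          apply mul_le_mul (hKu u) hnormx (norm_nonneg x)
          linarith
      _ ≤ 1 := by
          rw [div_eq_mul_inv, one_mul]
          rw [sub_mul]
          have : K * K⁻¹ = 1 := mul_inv_cancel₀ (ne_of_gt hKpos)
          rw [this]
          have : 0 ≤ K⁻¹ := inv_nonneg.mpr hKpos.le
          linarith
  have hvsum : v = ∑ u : ↥b, (B.repr x u) • (u.1 : Fin n → ℝ) := by
    have h0 := B.sum_repr x
    have h1 : ((∑ u : ↥b, B.repr x u • B u : ↥W) : Fin n → ℝ)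
        = ∑ u : ↥b, B.repr x u • (B u : Fin n → ℝ) := by
      push_cast
      rfl
    calc v = ((x : ↥W) : Fin n → ℝ) := rfl
      _ = ((∑ u : ↥b, B.repr x u • B u : ↥W) : Fin n → ℝ) := by rw [h0]
      _ = ∑ u : ↥b, B.repr x u • (B u : Fin n → ℝ) := h1
      _ = ∑ u : ↥b, B.repr x u • (u.1 : Fin n → ℝ) := by
          exact Finset.sum_congr rfl fun u _ => by rw [hBu u]
  -- the coefficient function
  set t : (Fin n → ℤ) → ℝ :=
    fun a => 1 + (if h : coeR a ∈ b then B.repr x ⟨coeR a, h⟩ else 0) with htdef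
  have ht0 : ∀ a, 0 ≤ t a := by
    intro a
    rw [htdef]
    dsimp only
    split
    · rename_i h
      have := hcbound ⟨coeR a, h⟩
      have := abs_le.mp this
      linarith [this.1]
    · linarith
  refine ⟨F, hFA, t, ht0, ?_⟩
  have hsplit : ∑ a ∈ F, t a • coeR a
      = ∑ a ∈ F, coeR a + ∑ a ∈ F, (if h : coeR a ∈ b then B.repr x ⟨coeR a, h⟩ else 0) • coeR a := by
    rw [← Finset.sum_add_distrib]
    refine Finset.sum_congr rfl fun a _ => ?_
    rw [htdef]
    dsimp only
    rw [add_smul, one_smul]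
  rw [hsplit]
  congr 1
  -- second sum equals v
  set P := F.filter (fun a => coeR a ∈ b) with hP
  have hzero : ∀ a ∈ F, a ∉ P →
      (if h : coeR a ∈ b then B.repr x ⟨coeR a, h⟩ else 0) • coeR a = 0 := by
    intro a haF haP
    have : ¬ (coeR a ∈ b) := fun hc => haP (Finset.mem_filter.mpr ⟨haF, hc⟩)
    rw [dif_neg this, zero_smul]
  have hPsum : ∑ a ∈ P, (if h : coeR a ∈ b then B.repr x ⟨coeR a, h⟩ else 0) • coeR a
      = ∑ a ∈ F, (if h : coeR a ∈ b then B.repr x ⟨coeR a, h⟩ else 0) • coeR a :=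
    Finset.sum_subset (Finset.filter_subset _ F) hzero
  rw [← hPsum, hvsum]
  -- bijection between P and b
  symm
  refine Finset.sum_bij (i := fun a (ha : a ∈ P) => (⟨coeR a, (Finset.mem_filter.mp ha).2⟩ : ↥b))
    (fun a ha => Finset.mem_univ _) ?_ ?_ ?_
  · intro a₁ ha₁ a₂ ha₂ hEq
    have : coeR a₁ = coeR a₂ := congrArg Subtype.val hEq
    exact coeR_injective this
  · intro u _
    have : (u : Fin n → ℝ) ∈ coeR '' (↑F : Set (Fin n → ℤ)) := hbsub u.2
    obtain ⟨a, haF, haeq⟩ := this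
    have haP : a ∈ P := Finset.mem_filter.mpr ⟨haF, by rw [haeq]; exact u.2⟩
    refine ⟨a, haP, ?_⟩
    exact Subtype.ext haeq
  · intro a ha
    have hmem : coeR a ∈ b := (Finset.mem_filter.mp ha).2
    rw [dif_pos hmem]

end PrismalAux

namespace PrismalAux

lemma sum_pos_of_ne_zero {ι : Type*} [Fintype ι] {v : ι → ℕ} (hv : v ≠ 0) :
    0 < ∑ i, v i := by
  by_contra h
  push_neg at h
  apply hv
  funext i
  have h2 := Nat.le_zero.mp h
  have := (Finset.sum_eq_zero_iff).mp h2 i (Finset.mem_univ i)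
  simpa using this

lemma eq_of_le_of_sum_eq {ι : Type*} [Fintype ι] {u v : ι → ℕ} (hle : u ≤ v)
    (hsum : ∑ i, u i = ∑ i, v i) : u = v := by
  by_contra hne
  have hex : ∃ i, u i < v i := by
    by_contra hex
    push_neg at hex
    exact hne (funext fun i => le_antisymm (hle i) (hex i))
  obtain ⟨i, hi⟩ := hex
  have : ∑ j, u j < ∑ j, v j :=
    Finset.sum_lt_sum (fun j _ => hle j) ⟨i, Finset.mem_univ i, hi⟩
  omega

/-- every "subtractive" submonoid of `ι → ℕ` is finitely generated (Dickson / Hilbert basis). -/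
lemma fg_of_subtractive {ι : Type*} [Fintype ι] (T : AddSubmonoid (ι → ℕ))
    (hsub : ∀ v ∈ T, ∀ u ∈ T, u ≤ v → v - u ∈ T) :
    ∃ Fb : Finset (ι → ℕ), AddSubmonoid.closure (↑Fb : Set (ι → ℕ)) = T := by
  classical
  set Min : Set (ι → ℕ) :=
    {v | v ∈ T ∧ v ≠ 0 ∧ ∀ u ∈ T, u ≠ 0 → u ≤ v → u = v} with hMin
  have hfin : Min.Finite := by
    by_contra hinf
    have hinf2 : Min.Infinite := hinf
    set f := hinf2.natEmbedding with hf
    have hPWO := Set.isPWO_of_wellQuasiOrderedLE (Set.univ : Set (ι → ℕ))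
    obtain ⟨m, n', hmn, hle⟩ := hPWO (fun k => ⟨(f k).1, Set.mem_univ _⟩)
    have h1 := (f m).2
    have h2 := (f n').2
    have : (f m).1 = (f n').1 := h2.2.2 (f m).1 h1.1 h1.2.1 hle
    have : f m = f n' := Subtype.ext this
    have := f.injective this
    omega
  have hgen : ∀ v ∈ T, v ∈ AddSubmonoid.closure Min := by
    suffices H : ∀ (N : ℕ) (v : ι → ℕ), (∑ i, v i) = N → v ∈ T →
        v ∈ AddSubmonoid.closure Min by
      intro v hv; exact H (∑ i, v i) v rfl hv
    intro N
    induction N using Nat.strong_induction_on with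
    | _ N ih =>
    intro v hN hv
    by_cases hv0 : v = 0
    · rw [hv0]; exact AddSubmonoid.zero_mem _
    · set S : Set (ι → ℕ) := {u | u ∈ T ∧ u ≠ 0 ∧ u ≤ v} with hS
      have hvS : v ∈ S := ⟨hv, hv0, le_rfl⟩
      set sums := (fun u => ∑ i, u i) '' S with hsums
      have hsumsne : sums.Nonempty := ⟨_, v, hvS, rfl⟩
      have hmem := Nat.sInf_mem hsumsne
      obtain ⟨u, huS, husum0⟩ := hmem
      have husum : ∑ i, u i = sInf sums := husum0
      clear husum0
      have huT : u ∈ T := huS.1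
      have hu0 : u ≠ 0 := huS.2.1
      have hulev : u ≤ v := huS.2.2
      have huMin : u ∈ Min := by
        refine ⟨huT, hu0, ?_⟩
        intro u' hu'T hu'0 hu'le
        have hu'S : u' ∈ S := ⟨hu'T, hu'0, le_trans hu'le hulev⟩
        have h1 : sInf sums ≤ ∑ i, u' i := Nat.sInf_le ⟨u', hu'S, rfl⟩
        have h2 : ∑ i, u' i ≤ ∑ i, u i := Finset.sum_le_sum fun i _ => hu'le i
        rw [← husum] at h1
        exact eq_of_le_of_sum_eq hu'le (by omega)
      have hvu : v - u ∈ T := hsub v hv u huT hulev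
      have hdecomp : v = u + (v - u) := by
        funext i
        simp only [Pi.add_apply, Pi.sub_apply]
        have hle2 : u i ≤ v i := hulev i
        omega
      have hsumlt : ∑ i, (v - u) i < N := by
        have h1 : ∑ i, (v - u) i + ∑ i, u i = ∑ i, v i := by
          rw [← Finset.sum_add_distrib]
          refine Finset.sum_congr rfl fun i _ => ?_
          have hle2 : u i ≤ v i := hulev i
          simp only [Pi.sub_apply]
          omega
        have h2 := sum_pos_of_ne_zero hu0
        omega
      have hrec := ih _ hsumlt (v - u) rfl hvu
      rw [hdecomp]
      exact AddSubmonoid.add_mem _ (AddSubmonoid.subset_closure huMin) hrec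
  refine ⟨hfin.toFinset, ?_⟩
  apply le_antisymm
  · rw [AddSubmonoid.closure_le]
    intro v hvMin
    rw [Set.Finite.coe_toFinset] at hvMin
    exact hvMin.1
  · intro v hv
    have := hgen v hv
    rwa [← Set.Finite.coe_toFinset hfin] at this

end PrismalAux

namespace PrismalAux

/-- realize a submonoid set as an `AddSubmonoid`. -/
def toAddSubmonoid {n : ℕ} {C : Set (Fin n → ℤ)} (h : IsSubmonoidSet C) :
    AddSubmonoid (Fin n → ℤ) where
  carrier := C
  zero_mem' := h.1
  add_mem' := fun {a b} ha hb => h.2 a ha b hb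

lemma component_crux {n : ℕ} {Cc : Set (Fin n → ℤ)} (hC : IsSubmonoidSet Cc)
    (hpure : IsPure Cc)
    (V : Submodule ℝ (Fin n → ℝ)) (F : Finset (Fin n → ℤ))
    (hFA : ↑F ⊆ {α ∈ Cc | coeR α ∈ V})
    (hspan : V ≤ Submodule.span ℝ (coeR '' (↑F : Set (Fin n → ℤ))))
    (k : (Fin n → ℤ) → ℕ) (hk : ∀ a ∈ F, 1 ≤ k a)
    {z : Fin n → ℤ} (hz : z ∈ intCl {α ∈ Cc | coeR α ∈ V}) :
    ∀ m : ℕ, 1 ≤ m → m • z + ∑ a ∈ F, k a • a ∈ Cc := by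
  classical
  intro m hm
  set A : Set (Fin n → ℤ) := {α ∈ Cc | coeR α ∈ V} with hA
  obtain ⟨ρ, hρ, hint⟩ := interior_point (A := A) hFA
  have hVclosed : IsClosed ((V : Set (Fin n → ℝ))) := Submodule.closed_of_finiteDimensional V
  have hconvV : closure (convC A) ⊆ (V : Set (Fin n → ℝ)) := by
    apply closure_minimal _ hVclosed
    apply convexHull_min _ (V.convex)
    rintro x ⟨a, ha, rfl⟩
    exact ha.2
  have hz' : coeR z ∈ closure (convC A) := hz
  have hzV : coeR z ∈ V := hconvV hz'
  have hmpos : (0:ℝ) < (m:ℝ) := by exact_mod_cast Nat.lt_of_lt_of_le Nat.zero_lt_one hm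
  have hme : (0:ℝ) < ρ / m := div_pos hρ hmpos
  obtain ⟨p, hpA, hpdist⟩ := Metric.mem_closure_iff.mp hz' (ρ/m) hme
  have hpZ : p ∈ ZCne A := convexHull_coeR_subset_ZCne A hpA
  have hpV : p ∈ V := ZCne_subset_submodule (fun a ha => ha.2) hpZ
  set e : Fin n → ℝ := (m:ℝ) • (coeR z - p) with he
  have heV : e ∈ V := Submodule.smul_mem _ _ (Submodule.sub_mem _ hzV hpV)
  have heN : ‖e‖ ≤ ρ := by
    rw [he, norm_smul]
    have h1 : ‖coeR z - p‖ < ρ / m := by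
      rw [← dist_eq_norm]
      exact hpdist
    have h2 : ‖((m:ℝ))‖ = (m:ℝ) := by
      rw [Real.norm_eq_abs, abs_of_pos hmpos]
    rw [h2]
    calc (m:ℝ) * ‖coeR z - p‖ ≤ (m:ℝ) * (ρ/m) :=
          mul_le_mul_of_nonneg_left h1.le hmpos.le
      _ = ρ := by field_simp
  have hes : e ∈ Submodule.span ℝ (coeR '' (↑F : Set (Fin n → ℤ))) := hspan heV
  have hw : (∑ a ∈ F, coeR a) + e ∈ ZCne A := hint e hes heN
  have hthird : (∑ a ∈ F, ((k a - 1 : ℕ) : ℝ) • coeR a) ∈ ZCne A :=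
    ⟨F, hFA, fun a => ((k a - 1 : ℕ) : ℝ), fun a => Nat.cast_nonneg _, rfl⟩
  have halg : coeR (m • z + ∑ a ∈ F, k a • a)
      = ((m:ℝ) • p + ((∑ a ∈ F, coeR a) + e)) + (∑ a ∈ F, ((k a - 1 : ℕ) : ℝ) • coeR a) := by
    rw [coeR_add, coeR_nsmul, coeR_sum]
    have hterm : ∀ a ∈ F, coeR (k a • a) = (1 : ℝ) • coeR a + ((k a - 1 : ℕ) : ℝ) • coeR a := by
      intro a ha
      rw [coeR_nsmul, ← add_smul]
      congr 1
      have : ((k a - 1 : ℕ) : ℝ) = (k a : ℝ) - 1 := by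
        have := hk a ha
        push_cast [Nat.cast_sub this]
        ring
      rw [this]
      ring
    rw [Finset.sum_congr rfl hterm, Finset.sum_add_distrib]
    have h3 : (m:ℝ) • p + ((∑ a ∈ F, coeR a) + e) = (m:ℝ) • coeR z + ∑ a ∈ F, coeR a := by
      rw [he, smul_sub]
      abel
    rw [h3]
    have h4 : ∑ a ∈ F, (1:ℝ) • coeR a = ∑ a ∈ F, coeR a :=
      Finset.sum_congr rfl fun a _ => one_smul _ _
    rw [h4]
    abel
  have hmem : coeR (m • z + ∑ a ∈ F, k a • a) ∈ ZCne A := by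
    rw [halg]
    exact ZCne_add_mem (ZCne_add_mem (ZCne_smul_mem hmpos.le hpZ) hw) hthird
  obtain ⟨k₀, hk₀, hk₀mem⟩ := exists_pos_nsmul_mem_closure hmem
  have hsubC : (AddSubmonoid.closure A : Set (Fin n → ℤ)) ⊆ Cc := by
    have h5 : AddSubmonoid.closure A ≤ toAddSubmonoid hC := by
      rw [AddSubmonoid.closure_le]
      intro a ha
      exact ha.1
    exact h5
  exact hpure k₀ _ hk₀ (hsubC hk₀mem)

end PrismalAux

namespace PrismalAux

lemma exists_rep_of_mem_closure {M : Type*} [AddCommMonoid M] (G : Finset M) {x : M}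
    (hx : x ∈ AddSubmonoid.closure (G : Set M)) :
    ∃ ν : ↥G → ℕ, x = ∑ g : ↥G, ν g • (g : M) := by
  classical
  set S : AddSubmonoid M :=
    { carrier := {y | ∃ ν : ↥G → ℕ, y = ∑ g : ↥G, ν g • (g : M)}
      zero_mem' := ⟨0, by simp⟩
      add_mem' := by
        rintro a b ⟨ν, hν⟩ ⟨μ, hμ⟩
        refine ⟨ν + μ, ?_⟩
        rw [hν, hμ, ← Finset.sum_add_distrib]
        exact Finset.sum_congr rfl fun g _ => by
          simp only [Pi.add_apply]
          rw [add_nsmul] } with hS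
  have hsub : (G : Set M) ⊆ (S : Set M) := by
    intro g₀ hg₀
    refine ⟨fun g => if g = (⟨g₀, hg₀⟩ : ↥G) then 1 else 0, ?_⟩
    have h1 : ∀ g : ↥G, (if g = (⟨g₀, hg₀⟩ : ↥G) then (1:ℕ) else 0) • (g : M)
        = if g = (⟨g₀, hg₀⟩ : ↥G) then (g : M) else 0 := by
      intro g
      split <;> simp
    rw [Finset.sum_congr rfl fun g _ => h1 g]
    rw [Finset.sum_ite_eq' Finset.univ]
    simp
  exact (AddSubmonoid.closure_le.mpr hsub) hx

lemma sum_image_card {α β M : Type*} [DecidableEq β] [AddCommMonoid M]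
    (S : Finset α) (f : α → β) (g : β → M) :
    ∑ a ∈ S, g (f a) = ∑ b ∈ S.image f, (S.filter (fun a => f a = b)).card • g b := by
  classical
  rw [← Finset.sum_fiberwise_of_maps_to (fun a ha => Finset.mem_image_of_mem f ha)
    (fun a => g (f a))]
  refine Finset.sum_congr rfl fun b hb => ?_
  rw [Finset.sum_congr rfl (fun a ha => by rw [(Finset.mem_filter.mp ha).2]),
    Finset.sum_const]

section ProdPlumbing
variable {d₁ d₂ : ℕ}

def pr1 (γ : Fin (d₁ + d₂) → ℤ) : Fin d₁ → ℤ := fun i => γ (Fin.castAdd d₂ i)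
def pr2 (γ : Fin (d₁ + d₂) → ℤ) : Fin d₂ → ℤ := fun j => γ (Fin.natAdd d₁ j)
def emb1 (x : Fin d₁ → ℤ) : Fin (d₁ + d₂) → ℤ := Fin.append x 0
def emb2 (y : Fin d₂ → ℤ) : Fin (d₁ + d₂) → ℤ := Fin.append 0 y

lemma pr1_emb1 (x : Fin d₁ → ℤ) : pr1 (d₂ := d₂) (emb1 x) = x := by
  funext i; simp [pr1, emb1, Fin.append_left]

lemma pr2_emb2 (y : Fin d₂ → ℤ) : pr2 (d₁ := d₁) (emb2 y) = y := by
  funext j; simp [pr2, emb2, Fin.append_right]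

lemma pr1_emb2 (y : Fin d₂ → ℤ) : pr1 (emb2 (d₁ := d₁) y) = 0 := by
  funext i; simp [pr1, emb2, Fin.append_left]

lemma pr2_emb1 (x : Fin d₁ → ℤ) : pr2 (emb1 (d₂ := d₂) x) = 0 := by
  funext j; simp [pr2, emb1, Fin.append_right]

lemma decomp (γ : Fin (d₁ + d₂) → ℤ) : emb1 (pr1 γ) + emb2 (pr2 γ) = γ := by
  funext i
  induction i using Fin.addCases with
  | left i => simp [emb1, emb2, pr1, Fin.append_left, Fin.append_right]
  | right j => simp [emb1, emb2, pr2, Fin.append_left, Fin.append_right]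

lemma emb1_add (x x' : Fin d₁ → ℤ) : emb1 (d₂ := d₂) (x + x') = emb1 x + emb1 x' := by
  funext i
  induction i using Fin.addCases with
  | left i => simp [emb1, Fin.append_left]
  | right j => simp [emb1, Fin.append_right]

lemma emb2_add (y y' : Fin d₂ → ℤ) : emb2 (d₁ := d₁) (y + y') = emb2 y + emb2 y' := by
  funext i
  induction i using Fin.addCases with
  | left i => simp [emb2, Fin.append_left]
  | right j => simp [emb2, Fin.append_right]

lemma emb1_nsmul (m : ℕ) (x : Fin d₁ → ℤ) : emb1 (d₂ := d₂) (m • x) = m • emb1 x := by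
  funext i
  induction i using Fin.addCases with
  | left i => simp [emb1, Fin.append_left]
  | right j => simp [emb1, Fin.append_right]

lemma emb2_nsmul (m : ℕ) (y : Fin d₂ → ℤ) : emb2 (d₁ := d₁) (m • y) = m • emb2 y := by
  funext i
  induction i using Fin.addCases with
  | left i => simp [emb2, Fin.append_left]
  | right j => simp [emb2, Fin.append_right]

lemma emb1_sum {ι : Type*} (s : Finset ι) (f : ι → (Fin d₁ → ℤ)) :
    emb1 (d₂ := d₂) (∑ i ∈ s, f i) = ∑ i ∈ s, emb1 (f i) := by
  classical
  induction s using Finset.induction with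
  | empty =>
      funext i
      induction i using Fin.addCases with
      | left i => simp [emb1, Fin.append_left]
      | right j => simp [emb1, Fin.append_right]
  | @insert a s' h ih => rw [Finset.sum_insert h, Finset.sum_insert h, emb1_add, ih]

lemma emb2_sum {ι : Type*} (s : Finset ι) (f : ι → (Fin d₂ → ℤ)) :
    emb2 (d₁ := d₁) (∑ i ∈ s, f i) = ∑ i ∈ s, emb2 (f i) := by
  classical
  induction s using Finset.induction with
  | empty =>
      funext i
      induction i using Fin.addCases with
      | left i => simp [emb2, Fin.append_left]
      | right j => simp [emb2, Fin.append_right]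
  | @insert a s' h ih => rw [Finset.sum_insert h, Finset.sum_insert h, emb2_add, ih]

lemma pr1_add (γ δ : Fin (d₁ + d₂) → ℤ) : pr1 (γ + δ) = pr1 γ + pr1 δ := rfl
lemma pr2_add (γ δ : Fin (d₁ + d₂) → ℤ) : pr2 (γ + δ) = pr2 γ + pr2 δ := rfl
lemma pr1_nsmul (m : ℕ) (γ : Fin (d₁ + d₂) → ℤ) : pr1 (m • γ) = m • pr1 γ := rfl
lemma pr2_nsmul (m : ℕ) (γ : Fin (d₁ + d₂) → ℤ) : pr2 (m • γ) = m • pr2 γ := rfl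

lemma pr1_sum {ι : Type*} (s : Finset ι) (f : ι → (Fin (d₁ + d₂) → ℤ)) :
    pr1 (∑ i ∈ s, f i) = ∑ i ∈ s, pr1 (f i) := by
  funext i
  simp [pr1, Finset.sum_apply]

lemma pr2_sum {ι : Type*} (s : Finset ι) (f : ι → (Fin (d₁ + d₂) → ℤ)) :
    pr2 (∑ i ∈ s, f i) = ∑ i ∈ s, pr2 (f i) := by
  funext j
  simp [pr2, Finset.sum_apply]

/-- real restriction to the first block, as a linear map -/
def rr1 : (Fin (d₁ + d₂) → ℝ) →ₗ[ℝ] (Fin d₁ → ℝ) := LinearMap.funLeft ℝ ℝ (Fin.castAdd d₂)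
def rr2 : (Fin (d₁ + d₂) → ℝ) →ₗ[ℝ] (Fin d₂ → ℝ) := LinearMap.funLeft ℝ ℝ (Fin.natAdd d₁)

lemma rr1_coeR (γ : Fin (d₁ + d₂) → ℤ) : rr1 (coeR γ) = coeR (pr1 γ) := rfl
lemma rr2_coeR (γ : Fin (d₁ + d₂) → ℤ) : rr2 (coeR γ) = coeR (pr2 γ) := rfl

end ProdPlumbing

end PrismalAux


open PrismalAux in
/-- The cartesian product of two prismal submonoids is prismal. -/
theorem prod_prismal {d₁ d₂ : ℕ} (C₁ : Set (Fin d₁ → ℤ)) (C₂ : Set (Fin d₂ → ℤ))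
    (hC₁ : IsSubmonoidSet C₁) (hC₂ : IsSubmonoidSet C₂)
    (hp₁ : Prismal C₁) (hp₂ : Prismal C₂) :
    Prismal {γ : Fin (d₁ + d₂) → ℤ |
      (fun i => γ (Fin.castAdd d₂ i)) ∈ C₁ ∧ (fun j => γ (Fin.natAdd d₁ j)) ∈ C₂} := by
  classical
  constructor
  · -- purity
    intro k γ hk hkγ
    obtain ⟨h1, h2⟩ := hkγ
    exact ⟨hp₁.1 k _ hk h1, hp₂.1 k _ hk h2⟩
  · -- almost prismal
    intro U
    show IsFGSet (intCl {γ : Fin (d₁ + d₂) → ℤ | (pr1 γ ∈ C₁ ∧ pr2 γ ∈ C₂) ∧ coeR γ ∈ U})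
    set D : Set (Fin (d₁ + d₂) → ℤ) :=
      {γ | (pr1 γ ∈ C₁ ∧ pr2 γ ∈ C₂) ∧ coeR γ ∈ U} with hDdef
    have hD : IsSubmonoidSet D := by
      constructor
      · refine ⟨⟨?_, ?_⟩, ?_⟩
        · show pr1 (0 : Fin (d₁+d₂) → ℤ) ∈ C₁; exact hC₁.1
        · show pr2 (0 : Fin (d₁+d₂) → ℤ) ∈ C₂; exact hC₂.1
        · rw [coeR_zero]; exact U.zero_mem
      · intro a ha b hb
        refine ⟨⟨?_, ?_⟩, ?_⟩
        · rw [show pr1 (a + b) = pr1 a + pr1 b from rfl]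
          exact hC₁.2 _ ha.1.1 _ hb.1.1
        · rw [show pr2 (a + b) = pr2 a + pr2 b from rfl]
          exact hC₂.2 _ ha.1.2 _ hb.1.2
        · rw [coeR_add]; exact U.add_mem ha.2 hb.2
    set V₁ : Submodule ℝ (Fin d₁ → ℝ) := Submodule.span ℝ (coeR '' (pr1 '' D)) with hV₁
    set V₂ : Submodule ℝ (Fin d₂ → ℝ) := Submodule.span ℝ (coeR '' (pr2 '' D)) with hV₂
    set A₁ : Set (Fin d₁ → ℤ) := {α ∈ C₁ | coeR α ∈ V₁} with hA₁
    set A₂ : Set (Fin d₂ → ℤ) := {α ∈ C₂ | coeR α ∈ V₂} with hA₂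
    obtain ⟨G₁, hG₁⟩ := hp₁.2 V₁
    obtain ⟨G₂, hG₂⟩ := hp₂.2 V₂
    have hDA₁ : ∀ γ ∈ D, pr1 γ ∈ A₁ := fun γ hγ =>
      ⟨hγ.1.1, Submodule.subset_span ⟨pr1 γ, ⟨γ, hγ, rfl⟩, rfl⟩⟩
    have hDA₂ : ∀ γ ∈ D, pr2 γ ∈ A₂ := fun γ hγ =>
      ⟨hγ.1.2, Submodule.subset_span ⟨pr2 γ, ⟨γ, hγ, rfl⟩, rfl⟩⟩
    set N : Set (Fin (d₁ + d₂) → ℤ) :=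
      {z | pr1 z ∈ intCl A₁ ∧ pr2 z ∈ intCl A₂ ∧ coeR z ∈ U} with hN
    -- STEP 1 : intCl D ⊆ N
    have step1 : intCl D ⊆ N := by
      have hcl1 : closure (convC D) ⊆ (rr1 (d₁ := d₁) (d₂ := d₂)) ⁻¹' (closure (convC A₁)) := by
        apply closure_minimal
        · apply convexHull_min
          · rintro x ⟨γ, hγ, rfl⟩
            show rr1 (coeR γ) ∈ closure (convC A₁)
            rw [rr1_coeR]
            exact subset_closure (subset_convexHull ℝ _ ⟨pr1 γ, hDA₁ γ hγ, rfl⟩)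
          · exact ((convex_convexHull ℝ _).closure).linear_preimage rr1
        · exact (isClosed_closure).preimage rr1.continuous_of_finiteDimensional
      have hcl2 : closure (convC D) ⊆ (rr2 (d₁ := d₁) (d₂ := d₂)) ⁻¹' (closure (convC A₂)) := by
        apply closure_minimal
        · apply convexHull_min
          · rintro x ⟨γ, hγ, rfl⟩
            show rr2 (coeR γ) ∈ closure (convC A₂)
            rw [rr2_coeR]
            exact subset_closure (subset_convexHull ℝ _ ⟨pr2 γ, hDA₂ γ hγ, rfl⟩)
          · exact ((convex_convexHull ℝ _).closure).linear_preimage rr2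
        · exact (isClosed_closure).preimage rr2.continuous_of_finiteDimensional
      have hclU : closure (convC D) ⊆ (U : Set (Fin (d₁+d₂) → ℝ)) := by
        apply closure_minimal _ (Submodule.closed_of_finiteDimensional U)
        apply convexHull_min _ U.convex
        rintro x ⟨γ, hγ, rfl⟩
        exact hγ.2
      intro z hz
      refine ⟨?_, ?_, hclU hz⟩
      · have := hcl1 hz
        rw [Set.mem_preimage, rr1_coeR] at this
        exact this
      · have := hcl2 hz
        rw [Set.mem_preimage, rr2_coeR] at this
        exact this
    -- STEP 2 : N ⊆ intCl D
    have step2 : N ⊆ intCl D := by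
      -- choose spanning finite subsets of D
      obtain ⟨b₁, hb₁sub, hb₁span, hb₁li⟩ :=
        exists_linearIndependent ℝ (coeR '' (pr1 '' D))
      obtain ⟨b₂, hb₂sub, hb₂span, hb₂li⟩ :=
        exists_linearIndependent ℝ (coeR '' (pr2 '' D))
      have hb₁fin : b₁.Finite := hb₁li.setFinite
      have hb₂fin : b₂.Finite := hb₂li.setFinite
      have hchoice₁ : ∀ u : ↥(hb₁fin.toFinset), ∃ d, d ∈ D ∧ coeR (pr1 d) = u.1 := by
        intro u
        have hu : u.1 ∈ b₁ := (hb₁fin.mem_toFinset).mp u.2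
        obtain ⟨y, hy, hyeq⟩ := hb₁sub hu
        obtain ⟨γ, hγ, rfl⟩ := hy
        exact ⟨γ, hγ, hyeq⟩
      have hchoice₂ : ∀ u : ↥(hb₂fin.toFinset), ∃ d, d ∈ D ∧ coeR (pr2 d) = u.1 := by
        intro u
        have hu : u.1 ∈ b₂ := (hb₂fin.mem_toFinset).mp u.2
        obtain ⟨y, hy, hyeq⟩ := hb₂sub hu
        obtain ⟨γ, hγ, rfl⟩ := hy
        exact ⟨γ, hγ, hyeq⟩
      set dd₁ := fun u => (hchoice₁ u).choose with hdd₁def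
      set dd₂ := fun u => (hchoice₂ u).choose with hdd₂def
      have hdd₁ : ∀ u, dd₁ u ∈ D ∧ coeR (pr1 (dd₁ u)) = u.1 := fun u => (hchoice₁ u).choose_spec
      have hdd₂ : ∀ u, dd₂ u ∈ D ∧ coeR (pr2 (dd₂ u)) = u.1 := fun u => (hchoice₂ u).choose_spec
      set S : Finset (Fin (d₁ + d₂) → ℤ) :=
        Finset.univ.image dd₁ ∪ Finset.univ.image dd₂ with hSdef
      have hSD : ↑S ⊆ D := by
        intro d hd
        rw [hSdef] at hd
        simp only [Finset.coe_union, Set.mem_union, Finset.coe_image, Set.mem_image] at hd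
        rcases hd with ⟨u, _, rfl⟩ | ⟨u, _, rfl⟩
        · exact (hdd₁ u).1
        · exact (hdd₂ u).1
      set w : Fin (d₁ + d₂) → ℤ := ∑ d ∈ S, d with hw
      have hwD : w ∈ D := AddSubmonoid.sum_mem (toAddSubmonoid hD) (fun d hd => hSD hd)
      set F₁ : Finset (Fin d₁ → ℤ) := S.image pr1 with hF₁def
      set F₂ : Finset (Fin d₂ → ℤ) := S.image pr2 with hF₂def
      set k₁ : (Fin d₁ → ℤ) → ℕ := fun a => (S.filter (fun d => pr1 d = a)).card with hk₁def
      set k₂ : (Fin d₂ → ℤ) → ℕ := fun a => (S.filter (fun d => pr2 d = a)).card with hk₂def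
      have hw1 : pr1 w = ∑ a ∈ F₁, k₁ a • a := by
        rw [hw, pr1_sum]
        exact sum_image_card S pr1 id
      have hw2 : pr2 w = ∑ a ∈ F₂, k₂ a • a := by
        rw [hw, pr2_sum]
        exact sum_image_card S pr2 id
      have hk₁pos : ∀ a ∈ F₁, 1 ≤ k₁ a := by
        intro a ha
        obtain ⟨d, hd, rfl⟩ := Finset.mem_image.mp ha
        exact Finset.card_pos.mpr ⟨d, Finset.mem_filter.mpr ⟨hd, rfl⟩⟩
      have hk₂pos : ∀ a ∈ F₂, 1 ≤ k₂ a := by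
        intro a ha
        obtain ⟨d, hd, rfl⟩ := Finset.mem_image.mp ha
        exact Finset.card_pos.mpr ⟨d, Finset.mem_filter.mpr ⟨hd, rfl⟩⟩
      have hF₁A : ↑F₁ ⊆ A₁ := by
        intro a ha
        obtain ⟨d, hd, rfl⟩ := Finset.mem_image.mp (by exact_mod_cast ha)
        exact hDA₁ d (hSD hd)
      have hF₂A : ↑F₂ ⊆ A₂ := by
        intro a ha
        obtain ⟨d, hd, rfl⟩ := Finset.mem_image.mp (by exact_mod_cast ha)
        exact hDA₂ d (hSD hd)
      have hspan₁ : V₁ ≤ Submodule.span ℝ (coeR '' (↑F₁ : Set (Fin d₁ → ℤ))) := by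
        rw [hV₁, ← hb₁span]
        apply Submodule.span_le.mpr
        intro u hu
        have hmem : u ∈ coeR '' (↑F₁ : Set (Fin d₁ → ℤ)) := by
          refine ⟨pr1 (dd₁ ⟨u, (hb₁fin.mem_toFinset).mpr hu⟩), ?_, (hdd₁ _).2⟩
          refine Finset.mem_coe.mpr (Finset.mem_image.mpr ⟨dd₁ ⟨u, _⟩, ?_, rfl⟩)
          rw [hSdef]
          exact Finset.mem_union_left _ (Finset.mem_image.mpr ⟨_, Finset.mem_univ _, rfl⟩)
        exact Submodule.subset_span hmem
      have hspan₂ : V₂ ≤ Submodule.span ℝ (coeR '' (↑F₂ : Set (Fin d₂ → ℤ))) := by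
        rw [hV₂, ← hb₂span]
        apply Submodule.span_le.mpr
        intro u hu
        have hmem : u ∈ coeR '' (↑F₂ : Set (Fin d₂ → ℤ)) := by
          refine ⟨pr2 (dd₂ ⟨u, (hb₂fin.mem_toFinset).mpr hu⟩), ?_, (hdd₂ _).2⟩
          refine Finset.mem_coe.mpr (Finset.mem_image.mpr ⟨dd₂ ⟨u, _⟩, ?_, rfl⟩)
          rw [hSdef]
          exact Finset.mem_union_right _ (Finset.mem_image.mpr ⟨_, Finset.mem_univ _, rfl⟩)
        exact Submodule.subset_span hmem
      intro z hz
      obtain ⟨hz1, hz2, hz3⟩ := hz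
      have hcrux₁ : ∀ m : ℕ, 1 ≤ m → m • pr1 z + pr1 w ∈ C₁ := by
        intro m hm
        rw [hw1]
        exact component_crux hC₁ hp₁.1 V₁ F₁ hF₁A hspan₁ k₁ hk₁pos hz1 m hm
      have hcrux₂ : ∀ m : ℕ, 1 ≤ m → m • pr2 z + pr2 w ∈ C₂ := by
        intro m hm
        rw [hw2]
        exact component_crux hC₂ hp₂.1 V₂ F₂ hF₂A hspan₂ k₂ hk₂pos hz2 m hm
      have hwU : coeR w ∈ U := hwD.2
      have hdm : ∀ m : ℕ, 1 ≤ m → m • z + w ∈ D := by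
        intro m hm
        refine ⟨⟨?_, ?_⟩, ?_⟩
        · rw [show pr1 (m • z + w) = m • pr1 z + pr1 w from rfl]
          exact hcrux₁ m hm
        · rw [show pr2 (m • z + w) = m • pr2 z + pr2 w from rfl]
          exact hcrux₂ m hm
        · rw [coeR_add, coeR_nsmul]
          exact U.add_mem (U.smul_mem _ hz3) hwU
      -- limit argument
      show coeR z ∈ closure (convC D)
      have hseq : ∀ j : ℕ, coeR z + (1/((j:ℝ)+1)) • coeR w ∈ convC D := by
        intro j
        have hm : 1 ≤ j + 1 := Nat.le_add_left 1 j
        have hmR : ((j:ℝ)+1) = ((j+1 : ℕ) : ℝ) := by push_cast; ring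
        have hmpos : (0:ℝ) < (j:ℝ) + 1 := by positivity
        have hx' : coeR ((j+1) • z + w) ∈ convC D :=
          subset_convexHull ℝ _ ⟨(j+1) • z + w, hdm (j+1) hm, rfl⟩
        have h0' : (0 : Fin (d₁+d₂) → ℝ) ∈ convC D :=
          subset_convexHull ℝ _ ⟨0, hD.1, coeR_zero⟩
        have ha : (0:ℝ) ≤ 1/((j:ℝ)+1) := by positivity
        have hb : (0:ℝ) ≤ 1 - 1/((j:ℝ)+1) := by
          rw [sub_nonneg, div_le_one hmpos]
          linarith
        have hcomb := (convex_convexHull ℝ (coeR '' D)) hx' h0' ha hb (by ring)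
        have heq : (1/((j:ℝ)+1)) • coeR ((j+1) • z + w) + (1 - 1/((j:ℝ)+1)) • (0 : Fin (d₁+d₂) → ℝ)
            = coeR z + (1/((j:ℝ)+1)) • coeR w := by
          rw [smul_zero, add_zero, coeR_add, coeR_nsmul, smul_add, smul_smul]
          congr 1
          rw [← hmR]
          rw [show (1/((j:ℝ)+1)) * ((j:ℝ)+1) = 1 by field_simp]
          rw [one_smul]
        rw [heq] at hcomb
        exact hcomb
      have htend : Filter.Tendsto (fun j : ℕ => coeR z + (1/((j:ℝ)+1)) • coeR w)
          Filter.atTop (nhds (coeR z)) := by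
        have h1 := tendsto_one_div_add_atTop_nhds_zero_nat (𝕜 := ℝ)
        have h2 := h1.smul_const (coeR w)
        rw [zero_smul] at h2
        have h3 := (tendsto_const_nhds (x := coeR z) (f := Filter.atTop (α := ℕ))).add h2
        rw [add_zero] at h3
        exact h3
      exact mem_closure_of_tendsto htend (Filter.Eventually.of_forall hseq)
    -- STEP 3 : N is finitely generated
    have step3 : ∃ Fb : Finset (Fin (d₁+d₂) → ℤ),
        (AddSubmonoid.closure (Fb : Set (Fin (d₁+d₂) → ℤ)) : Set (Fin (d₁+d₂) → ℤ)) = N := by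
      set gg : (↥G₁ ⊕ ↥G₂) → (Fin (d₁+d₂) → ℤ) :=
        Sum.elim (fun g => emb1 g.1) (fun g => emb2 g.1) with hgg
      set φHom : ((↥G₁ ⊕ ↥G₂) → ℕ) →+ (Fin (d₁+d₂) → ℤ) :=
        { toFun := fun v => ∑ i, v i • gg i
          map_zero' := by simp
          map_add' := by
            intro v v'
            rw [← Finset.sum_add_distrib]
            exact Finset.sum_congr rfl fun i _ => by
              simp only [Pi.add_apply]
              rw [add_nsmul] } with hφHom
      set T : AddSubmonoid ((↥G₁ ⊕ ↥G₂) → ℕ) :=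
        { carrier := {v | coeR (φHom v) ∈ U}
          zero_mem' := by
            show coeR (φHom 0) ∈ U
            rw [map_zero, coeR_zero]
            exact U.zero_mem
          add_mem' := by
            intro v v' hv hv'
            show coeR (φHom (v + v')) ∈ U
            rw [map_add, coeR_add]
            exact U.add_mem hv hv' } with hT
      have hTsub : ∀ v ∈ T, ∀ u ∈ T, u ≤ v → v - u ∈ T := by
        intro v hv u hu hle
        have hsum : (v - u) + u = v := by
          funext i
          have h7 : u i ≤ v i := hle i
          simp only [Pi.add_apply, Pi.sub_apply]
          omega
        have hφ : φHom (v - u) = φHom v - φHom u := by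
          have h6 := map_add φHom (v - u) u
          rw [hsum] at h6
          exact eq_sub_of_add_eq h6.symm
        show coeR (φHom (v - u)) ∈ U
        rw [hφ, coeR_sub]
        exact U.sub_mem hv hu
      obtain ⟨Fb, hFb⟩ := fg_of_subtractive T hTsub
      have hφN : ∀ v, φHom v ∈ N ↔ coeR (φHom v) ∈ U := by
        intro v
        constructor
        · exact fun h => h.2.2
        · intro hU'
          refine ⟨?_, ?_, hU'⟩
          · have h1 : pr1 (φHom v) = ∑ g : ↥G₁, v (Sum.inl g) • (g : Fin d₁ → ℤ) := by
              show pr1 (∑ i, v i • gg i) = _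
              rw [pr1_sum]
              rw [Fintype.sum_sum_type]
              have e1 : ∀ g : ↥G₁, pr1 (v (Sum.inl g) • gg (Sum.inl g))
                  = v (Sum.inl g) • (g : Fin d₁ → ℤ) := by
                intro g
                rw [pr1_nsmul]
                rw [hgg]
                simp only [Sum.elim_inl]
                rw [pr1_emb1]
              have e2 : ∀ g : ↥G₂, pr1 (v (Sum.inr g) • gg (Sum.inr g)) = 0 := by
                intro g
                rw [pr1_nsmul]
                rw [hgg]
                simp only [Sum.elim_inr]
                rw [pr1_emb2, smul_zero]
              rw [Finset.sum_congr rfl fun g _ => e1 g, Finset.sum_congr rfl fun g _ => e2 g]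
              simp
            rw [h1]
            have hmem : (∑ g : ↥G₁, v (Sum.inl g) • (g : Fin d₁ → ℤ))
                ∈ AddSubmonoid.closure (↑G₁ : Set (Fin d₁ → ℤ)) :=
              AddSubmonoid.sum_mem _ fun g _ =>
                AddSubmonoid.nsmul_mem _ (AddSubmonoid.subset_closure g.2) _
            have : (∑ g : ↥G₁, v (Sum.inl g) • (g : Fin d₁ → ℤ))
                ∈ (AddSubmonoid.closure (↑G₁ : Set (Fin d₁ → ℤ)) : Set (Fin d₁ → ℤ)) := hmem
            rwa [hG₁] at this
          · have h1 : pr2 (φHom v) = ∑ g : ↥G₂, v (Sum.inr g) • (g : Fin d₂ → ℤ) := by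
              show pr2 (∑ i, v i • gg i) = _
              rw [pr2_sum]
              rw [Fintype.sum_sum_type]
              have e1 : ∀ g : ↥G₁, pr2 (v (Sum.inl g) • gg (Sum.inl g)) = 0 := by
                intro g
                rw [pr2_nsmul]
                rw [hgg]
                simp only [Sum.elim_inl]
                rw [pr2_emb1, smul_zero]
              have e2 : ∀ g : ↥G₂, pr2 (v (Sum.inr g) • gg (Sum.inr g))
                  = v (Sum.inr g) • (g : Fin d₂ → ℤ) := by
                intro g
                rw [pr2_nsmul]
                rw [hgg]
                simp only [Sum.elim_inr]
                rw [pr2_emb2]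
              rw [Finset.sum_congr rfl fun g _ => e1 g, Finset.sum_congr rfl fun g _ => e2 g]
              simp
            rw [h1]
            have hmem : (∑ g : ↥G₂, v (Sum.inr g) • (g : Fin d₂ → ℤ))
                ∈ AddSubmonoid.closure (↑G₂ : Set (Fin d₂ → ℤ)) :=
              AddSubmonoid.sum_mem _ fun g _ =>
                AddSubmonoid.nsmul_mem _ (AddSubmonoid.subset_closure g.2) _
            have : (∑ g : ↥G₂, v (Sum.inr g) • (g : Fin d₂ → ℤ))
                ∈ (AddSubmonoid.closure (↑G₂ : Set (Fin d₂ → ℤ)) : Set (Fin d₂ → ℤ)) := hmem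
            rwa [hG₂] at this
      have hNmap : N = (AddSubmonoid.map φHom T : Set (Fin (d₁+d₂) → ℤ)) := by
        ext z
        constructor
        · intro hz
          obtain ⟨hz1, hz2, hz3⟩ := hz
          have hz1' : pr1 z ∈ (AddSubmonoid.closure (↑G₁ : Set (Fin d₁ → ℤ)) :
              Set (Fin d₁ → ℤ)) := by rw [hG₁]; exact hz1
          have hz2' : pr2 z ∈ (AddSubmonoid.closure (↑G₂ : Set (Fin d₂ → ℤ)) :
              Set (Fin d₂ → ℤ)) := by rw [hG₂]; exact hz2
          obtain ⟨ν₁, hν₁⟩ := exists_rep_of_mem_closure G₁ hz1'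
          obtain ⟨ν₂, hν₂⟩ := exists_rep_of_mem_closure G₂ hz2'
          set v : (↥G₁ ⊕ ↥G₂) → ℕ := Sum.elim ν₁ ν₂ with hv
          have hφv : φHom v = z := by
            show (∑ i, v i • gg i) = z
            rw [Fintype.sum_sum_type]
            have e1 : ∀ g : ↥G₁, v (Sum.inl g) • gg (Sum.inl g) = emb1 (ν₁ g • (g : Fin d₁ → ℤ)) := by
              intro g
              rw [hv, hgg]
              simp only [Sum.elim_inl]
              rw [emb1_nsmul]
            have e2 : ∀ g : ↥G₂, v (Sum.inr g) • gg (Sum.inr g) = emb2 (ν₂ g • (g : Fin d₂ → ℤ)) := by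
              intro g
              rw [hv, hgg]
              simp only [Sum.elim_inr]
              rw [emb2_nsmul]
            rw [Finset.sum_congr rfl fun g _ => e1 g, Finset.sum_congr rfl fun g _ => e2 g]
            rw [← emb1_sum, ← emb2_sum, ← hν₁, ← hν₂]
            exact decomp z
          refine ⟨v, ?_, hφv⟩
          show coeR (φHom v) ∈ U
          rw [hφv]
          exact hz3
        · rintro ⟨v, hvT, rfl⟩
          exact (hφN v).mpr hvT
      refine ⟨Fb.image φHom, ?_⟩
      rw [hNmap, ← hFb, AddMonoidHom.map_mclosure, Finset.coe_image]
    -- combine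
    obtain ⟨Fb, hFb⟩ := step3
    refine ⟨Fb, ?_⟩
    rw [hFb]
    exact Set.Subset.antisymm step2 step1
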